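/- For every pair of adjacent vertices a, c of the Farey graph F, the set of triangles of F containing both a and c is finite with exactly two elements. Equivalently, any edge of F is contained in exactly two triangles of F. -/

import Mathlib

/-- A coprime pair of integers, representing a vertex of the Farey graph. -/
def FareyPair : Type := {p : ℤ × ℤ // IsCoprime p.1 p.2}

/-- The equivalence identifying a coprime pair with its negation. -/
def fareySetoid : Setoid FareyPair where
  r x y := x.val = y.val ∨ x.val = -y.val
  iseqv := by
    refine ⟨fun x => Or.inl rfl, ?_, ?_⟩
    · rintro x y (h | h)
      · exact Or.inl h.symm
      · exact Or.inr (by rw [h, neg_neg])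
    · rintro x y z (h1 | h1) (h2 | h2)
      · exact Or.inl (h1.trans h2)
      · exact Or.inr (by rw [h1, h2])
      · exact Or.inr (by rw [h1, h2])
      · exact Or.inl (by rw [h1, h2, neg_neg])

/-- A vertex of the Farey graph: a coprime pair of integers up to simultaneous
negation. -/
def FareyVertex : Type := Quotient fareySetoid

/-- The vertex `[p:q]` of the Farey graph. -/
def fareyMk (p q : ℤ) (h : IsCoprime p q) : FareyVertex :=
  Quotient.mk fareySetoid ⟨(p, q), h⟩

/-- The determinant `p * s - q * r` of two pairs `(p, q)` and `(r, s)`. -/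
def fareyDet (x y : FareyPair) : ℤ := x.val.1 * y.val.2 - x.val.2 * y.val.1

private lemma farey_abs_helper (a b : ℤ) (h : a = b ∨ a = -b) :
    (|a| = 1) = (|b| = 1) := by
  rcases h with h | h <;> (rw [h]; try simp)

/-- The Farey graph: vertices `[p:q]` and `[r:s]` are adjacent iff `|ps - qr| = 1`. -/
def FareyGraph : SimpleGraph FareyVertex where
  Adj := Quotient.lift₂ (fun x y => |fareyDet x y| = 1) (by
    rintro x y x' y' (h1 | h1) (h2 | h2) <;> apply farey_abs_helper
    · exact Or.inl (by simp only [fareyDet, h1, h2])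
    · refine Or.inr ?_
      simp only [fareyDet, h1, h2, Prod.fst_neg, Prod.snd_neg]
      ring
    · refine Or.inr ?_
      simp only [fareyDet, h1, h2, Prod.fst_neg, Prod.snd_neg]
      ring
    · refine Or.inl ?_
      simp only [fareyDet, h1, h2, Prod.fst_neg, Prod.snd_neg]
      ring)
  symm := by
    refine ⟨?_⟩
    intro u v
    refine Quotient.inductionOn₂ u v ?_
    intro x y h
    change |fareyDet x y| = 1 at h
    change |fareyDet y x| = 1
    rw [show fareyDet y x = -fareyDet x y from by simp only [fareyDet]; ring,
      abs_neg]
    exact h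
  loopless := by
    refine ⟨?_⟩
    intro u
    refine Quotient.inductionOn u ?_
    intro x h
    change |fareyDet x x| = 1 at h
    rw [show fareyDet x x = 0 from by simp only [fareyDet]; ring] at h
    simp at h

noncomputable instance : DecidableEq FareyVertex := Classical.decEq _



section Aux

private lemma coprime_of_det' (a b c d : ℤ) (h : |a * d - b * c| = 1) :
    IsCoprime a b := by
  rcases abs_eq (by norm_num : (0:ℤ) ≤ 1) |>.mp h with h | h
  · exact ⟨d, -c, by linarith⟩
  · exact ⟨-d, c, by linarith⟩

private def vplus (x y : FareyPair) (h : |fareyDet x y| = 1) : FareyVertex :=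
  Quotient.mk fareySetoid ⟨(x.val.1 + y.val.1, x.val.2 + y.val.2),
    coprime_of_det' _ _ x.val.1 x.val.2 (by
      rw [show (x.val.1 + y.val.1) * x.val.2 - (x.val.2 + y.val.2) * x.val.1
          = -(fareyDet x y) by simp only [fareyDet]; ring, abs_neg]
      exact h)⟩

private def vminus (x y : FareyPair) (h : |fareyDet x y| = 1) : FareyVertex :=
  Quotient.mk fareySetoid ⟨(x.val.1 - y.val.1, x.val.2 - y.val.2),
    coprime_of_det' _ _ x.val.1 x.val.2 (by
      rw [show (x.val.1 - y.val.1) * x.val.2 - (x.val.2 - y.val.2) * x.val.1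
          = fareyDet x y by simp only [fareyDet]; ring]
      exact h)⟩

private lemma adj_mk (x y : FareyPair) :
    FareyGraph.Adj (Quotient.mk fareySetoid x) (Quotient.mk fareySetoid y)
      ↔ |fareyDet x y| = 1 := Iff.rfl

private lemma adj_vplus_left (x y : FareyPair) (h : |fareyDet x y| = 1) :
    FareyGraph.Adj (Quotient.mk fareySetoid x) (vplus x y h) := by
  rw [vplus]; refine (adj_mk _ _).mpr ?_
  rw [show fareyDet x ⟨(x.val.1 + y.val.1, x.val.2 + y.val.2), _⟩ = fareyDet x y
    by simp only [fareyDet]; ring]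
  exact h

private lemma adj_vplus_right (x y : FareyPair) (h : |fareyDet x y| = 1) :
    FareyGraph.Adj (Quotient.mk fareySetoid y) (vplus x y h) := by
  rw [vplus]; refine (adj_mk _ _).mpr ?_
  rw [show fareyDet y ⟨(x.val.1 + y.val.1, x.val.2 + y.val.2), _⟩ = -(fareyDet x y)
    by simp only [fareyDet]; ring, abs_neg]
  exact h

private lemma adj_vminus_left (x y : FareyPair) (h : |fareyDet x y| = 1) :
    FareyGraph.Adj (Quotient.mk fareySetoid x) (vminus x y h) := by
  rw [vminus]; refine (adj_mk _ _).mpr ?_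
  rw [show fareyDet x ⟨(x.val.1 - y.val.1, x.val.2 - y.val.2), _⟩ = -(fareyDet x y)
    by simp only [fareyDet]; ring, abs_neg]
  exact h

private lemma adj_vminus_right (x y : FareyPair) (h : |fareyDet x y| = 1) :
    FareyGraph.Adj (Quotient.mk fareySetoid y) (vminus x y h) := by
  rw [vminus]; refine (adj_mk _ _).mpr ?_
  rw [show fareyDet y ⟨(x.val.1 - y.val.1, x.val.2 - y.val.2), _⟩ = -(fareyDet x y)
    by simp only [fareyDet]; ring, abs_neg]
  exact h

private lemma vplus_ne_vminus (x y : FareyPair) (h : |fareyDet x y| = 1) :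
    vplus x y h ≠ vminus x y h := by
  intro heq
  rcases Quotient.exact heq with h1 | h1 <;>
    rw [Prod.ext_iff] at h1 <;>
    simp only [Prod.fst_neg, Prod.snd_neg] at h1
  · have hy1 : y.val.1 = 0 := by omega
    have hy2 : y.val.2 = 0 := by omega
    rw [show fareyDet x y = 0 by simp [fareyDet, hy1, hy2]] at h
    norm_num at h
  · have hx1 : x.val.1 = 0 := by omega
    have hx2 : x.val.2 = 0 := by omega
    rw [show fareyDet x y = 0 by simp [fareyDet, hx1, hx2]] at h
    norm_num at h

private lemma common_neighbor (x y : FareyPair) (h : |fareyDet x y| = 1)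
    (z : FareyVertex) (h1 : FareyGraph.Adj (Quotient.mk fareySetoid x) z)
    (h2 : FareyGraph.Adj (Quotient.mk fareySetoid y) z) :
    z = vplus x y h ∨ z = vminus x y h := by
  obtain ⟨w, rfl⟩ := Quotient.exists_rep z
  rw [adj_mk] at h1 h2
  set p := x.val.1 with hp
  set q := x.val.2 with hq
  set r := y.val.1 with hr
  set s := y.val.2 with hs
  set u := w.val.1 with hu'
  set v := w.val.2 with hv'
  have hu : u * (p * s - q * r) = r * (p * v - q * u) - p * (r * v - s * u) := by
    ring
  have hv : v * (p * s - q * r) = s * (p * v - q * u) - q * (r * v - s * u) := by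
    ring
  have h0 : (0:ℤ) ≤ 1 := by norm_num
  have hd : fareyDet x y = p * s - q * r := rfl
  have h1' : p * v - q * u = 1 ∨ p * v - q * u = -1 :=
    (abs_eq h0).mp h1
  have h2' : r * v - s * u = 1 ∨ r * v - s * u = -1 :=
    (abs_eq h0).mp h2
  have h' : p * s - q * r = 1 ∨ p * s - q * r = -1 := by
    rw [hd] at h; exact (abs_eq h0).mp h
  have hwval : w.val = (u, v) := rfl
  clear_value p q r s u v
  rcases h' with he | he <;> rcases h1' with hm | hm <;> rcases h2' with hl | hl <;>
    rw [he, hm, hl] at hu hv <;>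
    [skip; skip; skip; skip; skip; skip; skip; skip] <;>
    first
      | (refine Or.inl (Quotient.sound (Or.inl ?_)) <;>
          refine Prod.ext ?_ ?_ <;>
            simp only [Prod.fst_neg, Prod.snd_neg] <;> omega)
      | (refine Or.inl (Quotient.sound (Or.inr ?_)) <;>
          refine Prod.ext ?_ ?_ <;>
            simp only [Prod.fst_neg, Prod.snd_neg] <;> omega)
      | (refine Or.inr (Quotient.sound (Or.inl ?_)) <;>
          refine Prod.ext ?_ ?_ <;>
            simp only [Prod.fst_neg, Prod.snd_neg] <;> omega)
      | (refine Or.inr (Quotient.sound (Or.inr ?_)) <;>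
          refine Prod.ext ?_ ?_ <;>
            simp only [Prod.fst_neg, Prod.snd_neg] <;> omega)

end Aux

/-- Every edge of the Farey graph is contained in exactly two triangles. -/
theorem fareyGraph_two_triangles_on_edge (a c : FareyVertex)
    (hac : FareyGraph.Adj a c) :
    {t : Finset FareyVertex | FareyGraph.IsNClique 3 t ∧ a ∈ t ∧ c ∈ t}.Finite ∧
    {t : Finset FareyVertex | FareyGraph.IsNClique 3 t ∧ a ∈ t ∧ c ∈ t}.ncard = 2 := by
  obtain ⟨x, rfl⟩ := Quotient.exists_rep a
  obtain ⟨y, rfl⟩ := Quotient.exists_rep c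
  have hd : |fareyDet x y| = 1 := (adj_mk x y).mp hac
  set A : FareyVertex := Quotient.mk fareySetoid x with hA
  set C : FareyVertex := Quotient.mk fareySetoid y with hC
  set B₁ := vplus x y hd with hB₁
  set B₂ := vminus x y hd with hB₂
  have hAC : A ≠ C := hac.ne
  have haB₁ : FareyGraph.Adj A B₁ := adj_vplus_left x y hd
  have hcB₁ : FareyGraph.Adj C B₁ := adj_vplus_right x y hd
  have haB₂ : FareyGraph.Adj A B₂ := adj_vminus_left x y hd
  have hcB₂ : FareyGraph.Adj C B₂ := adj_vminus_right x y hd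
  have hB : B₁ ≠ B₂ := vplus_ne_vminus x y hd
  have hkey : {t : Finset FareyVertex | FareyGraph.IsNClique 3 t ∧ A ∈ t ∧ C ∈ t}
      = {({A, C, B₁} : Finset FareyVertex), ({A, C, B₂} : Finset FareyVertex)} := by
    ext t
    simp only [Set.mem_setOf_eq, Set.mem_insert_iff, Set.mem_singleton_iff]
    constructor
    · rintro ⟨ht, hat, hct⟩
      have hsub : ({A, C} : Finset FareyVertex) ⊆ t := by
        intro z hz
        simp only [Finset.mem_insert, Finset.mem_singleton] at hz
        rcases hz with rfl | rfl <;> assumption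
      have hcard2 : ({A, C} : Finset FareyVertex).card = 2 :=
        Finset.card_pair hAC
      have hcard1 : (t \ {A, C}).card = 1 := by
        rw [Finset.card_sdiff_of_subset hsub, ht.card_eq, hcard2]
      obtain ⟨b, hb⟩ := Finset.card_eq_one.mp hcard1
      have hbmem : b ∈ t \ ({A, C} : Finset FareyVertex) := by
        rw [hb]; exact Finset.mem_singleton_self b
      obtain ⟨hbt, hbn⟩ := Finset.mem_sdiff.mp hbmem
      have hbA : b ≠ A := fun h => hbn (by simp [h])
      have hbC : b ≠ C := fun h => hbn (by simp [h])
      have ht_eq : t = {A, C, b} := by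
        have := Finset.union_sdiff_of_subset hsub
        rw [hb] at this
        rw [← this]
        ext z
        simp only [Finset.mem_union, Finset.mem_insert, Finset.mem_singleton]
        tauto
      have hadj1 : FareyGraph.Adj A b := ht.isClique hat hbt (Ne.symm hbA)
      have hadj2 : FareyGraph.Adj C b := ht.isClique hct hbt (Ne.symm hbC)
      rcases common_neighbor x y hd b hadj1 hadj2 with rfl | rfl
      · exact Or.inl ht_eq
      · exact Or.inr ht_eq
    · rintro (rfl | rfl)
      · refine ⟨?_, ?_, ?_⟩
        · exact SimpleGraph.is3Clique_triple_iff.mpr ⟨hac, haB₁, hcB₁⟩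
        · simp
        · simp
      · refine ⟨?_, ?_, ?_⟩
        · exact SimpleGraph.is3Clique_triple_iff.mpr ⟨hac, haB₂, hcB₂⟩
        · simp
        · simp
  rw [hkey]
  have hne : ({A, C, B₁} : Finset FareyVertex) ≠ ({A, C, B₂} : Finset FareyVertex) := by
    intro heq
    have hmem : B₁ ∈ ({A, C, B₂} : Finset FareyVertex) := by
      rw [← heq]; simp
    simp only [Finset.mem_insert, Finset.mem_singleton] at hmem
    rcases hmem with h' | h' | h'
    · exact haB₁.ne' h'
    · exact hcB₁.ne' h'
    · exact hB h'
  exact ⟨(Set.finite_singleton _).insert _, Set.ncard_pair hne⟩
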